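/- Let A_1 = r_1 h S_1 g^{-1} and A_2 = r_2 h S_2 g^{-1} with r_1, r_2 > 0, h, g invertible, and S_1, S_2 unitary. If A_1†A_1 is proportional to A_2†A_2, then S := S_1 S_2† commutes with H = h†h. Conversely, if [H, S_1 S_2†] = 0 then A_1†A_1 ∝ A_2†A_2. -/

import Mathlib

open Matrix

noncomputable section

set_option maxHeartbeats 1000000 in
/-- for `A₁ = r₁ h S₁ g⁻¹`, `A₂ = r₂ h S₂ g⁻¹` with `r₁, r₂ > 0`,
`h, g` invertible and `S₁, S₂` unitary: `A₁ᴴA₁ ∝ A₂ᴴA₂` implies `[H, S₁S₂ᴴ] = 0`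
where `H = hᴴh`, and conversely. -/
theorem stmt4 {d : ℕ} (h g S₁ S₂ : Matrix (Fin d) (Fin d) ℂ)
    (hh : IsUnit h) (hg : IsUnit g)
    (hS₁ : S₁ ∈ Matrix.unitaryGroup (Fin d) ℂ) (hS₂ : S₂ ∈ Matrix.unitaryGroup (Fin d) ℂ)
    (r₁ r₂ : ℝ) (hr₁ : 0 < r₁) (hr₂ : 0 < r₂)
    (A₁ A₂ : Matrix (Fin d) (Fin d) ℂ)
    (hA₁ : A₁ = (r₁ : ℂ) • (h * S₁ * g⁻¹)) (hA₂ : A₂ = (r₂ : ℂ) • (h * S₂ * g⁻¹)) :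
    ((∃ c : ℝ, 0 < c ∧ A₁ᴴ * A₁ = (c : ℂ) • (A₂ᴴ * A₂)) →
        Commute (hᴴ * h) (S₁ * S₂ᴴ)) ∧
    (Commute (hᴴ * h) (S₁ * S₂ᴴ) →
        ∃ c : ℝ, 0 < c ∧ A₁ᴴ * A₁ = (c : ℂ) • (A₂ᴴ * A₂)) := by
  have hgd : IsUnit g.det := (Matrix.isUnit_iff_isUnit_det g).mp hg
  have hgH : IsUnit gᴴ.det := by
    rw [Matrix.det_conjTranspose]; exact hgd.star
  have hig : g⁻¹ * g = 1 := Matrix.nonsing_inv_mul g hgd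
  have higH : gᴴ * (g⁻¹)ᴴ = 1 := by
    rw [Matrix.conjTranspose_nonsing_inv, Matrix.mul_nonsing_inv _ hgH]
  have hS₁l : S₁ᴴ * S₁ = 1 := Matrix.mem_unitaryGroup_iff'.mp hS₁
  have hS₁r : S₁ * S₁ᴴ = 1 := Matrix.mem_unitaryGroup_iff.mp hS₁
  have hS₂l : S₂ᴴ * S₂ = 1 := Matrix.mem_unitaryGroup_iff'.mp hS₂
  have hS₂r : S₂ * S₂ᴴ = 1 := Matrix.mem_unitaryGroup_iff.mp hS₂
  have hHd : (hᴴ * h).det ≠ 0 := by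
    have := (Matrix.isUnit_iff_isUnit_det h).mp hh
    rw [Matrix.det_mul, Matrix.det_conjTranspose]
    exact mul_ne_zero (star_ne_zero.mpr this.ne_zero) this.ne_zero
  -- key computation
  have key : ∀ (r : ℝ) (S : Matrix (Fin d) (Fin d) ℂ),
      gᴴ * (((r : ℂ) • (h * S * g⁻¹))ᴴ * ((r : ℂ) • (h * S * g⁻¹))) * g
        = ((r^2 : ℝ) : ℂ) • (Sᴴ * (hᴴ * h) * S) := by
    intro r S
    simp only [conjTranspose_smul, Matrix.conjTranspose_mul, Matrix.smul_mul, Matrix.mul_smul,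
      smul_smul]
    rw [Complex.star_def, Complex.conj_ofReal]
    push_cast
    rw [← pow_two]
    congr 1
    calc gᴴ * ((g⁻¹)ᴴ * (Sᴴ * hᴴ) * (h * S * g⁻¹)) * g
        = (gᴴ * (g⁻¹)ᴴ) * (Sᴴ * (hᴴ * h) * S) * (g⁻¹ * g) := by
          simp only [Matrix.mul_assoc]
      _ = Sᴴ * (hᴴ * h) * S := by rw [higH, hig, Matrix.one_mul, Matrix.mul_one]
  have unconj : ∀ S : Matrix (Fin d) (Fin d) ℂ, S ∈ Matrix.unitaryGroup (Fin d) ℂ →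
      ∀ M, (Sᴴ * M * S).det = M.det := by
    intro S hS M
    have h1 : S * Sᴴ = 1 := Matrix.mem_unitaryGroup_iff.mp hS
    rw [Matrix.det_mul, Matrix.det_mul, mul_comm, ← mul_assoc, ← Matrix.det_mul,
      h1, Matrix.det_one, one_mul]
  constructor
  · rintro ⟨c, hc, hE⟩
    rcases Nat.eq_zero_or_pos d with hd | hd
    · subst hd
      exact Subsingleton.elim _ _
    have E2 : ((r₁^2 : ℝ) : ℂ) • (S₁ᴴ * (hᴴ * h) * S₁)
        = ((c * r₂^2 : ℝ) : ℂ) • (S₂ᴴ * (hᴴ * h) * S₂) := by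
      have := congrArg (fun M => gᴴ * M * g) hE
      simp only [Matrix.mul_smul, Matrix.smul_mul] at this
      rw [hA₁, hA₂] at this
      rw [key r₁ S₁] at this
      rw [this, key r₂ S₂, smul_smul]
      push_cast
      ring_nf
    -- determinants
    have hdet : ((r₁^2 : ℝ) : ℂ) ^ d * (hᴴ * h).det = ((c * r₂^2 : ℝ) : ℂ) ^ d * (hᴴ * h).det := by
      have := congrArg Matrix.det E2
      rwa [Matrix.det_smul, Matrix.det_smul, Fintype.card_fin,
        unconj S₁ hS₁, unconj S₂ hS₂] at this
    have hpow : ((r₁^2 : ℝ) : ℂ) ^ d = ((c * r₂^2 : ℝ) : ℂ) ^ d :=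
      mul_right_cancel₀ hHd hdet
    have hreal : (r₁^2 : ℝ) ^ d = (c * r₂^2 : ℝ) ^ d := by
      exact_mod_cast hpow
    have hscal : (r₁^2 : ℝ) = c * r₂^2 :=
      (pow_left_inj₀ (by positivity) (by positivity) hd.ne').mp hreal
    rw [← hscal] at E2
    have E3 : S₁ᴴ * (hᴴ * h) * S₁ = S₂ᴴ * (hᴴ * h) * S₂ := by
      have hne : ((r₁^2 : ℝ) : ℂ) ≠ 0 := Complex.ofReal_ne_zero.mpr (by positivity)
      exact smul_right_injective _ hne E2
    have := congrArg (fun M => S₁ * M * S₂ᴴ) E3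
    unfold Commute SemiconjBy
    calc hᴴ * h * (S₁ * S₂ᴴ)
        = (S₁ * S₁ᴴ) * (hᴴ * h) * (S₁ * S₂ᴴ) := by rw [hS₁r, Matrix.one_mul]
      _ = S₁ * (S₁ᴴ * (hᴴ * h) * S₁) * S₂ᴴ := by simp only [Matrix.mul_assoc]
      _ = S₁ * (S₂ᴴ * (hᴴ * h) * S₂) * S₂ᴴ := by rw [E3]
      _ = (S₁ * S₂ᴴ) * (hᴴ * h) * (S₂ * S₂ᴴ) := by simp only [Matrix.mul_assoc]
      _ = S₁ * S₂ᴴ * (hᴴ * h) := by rw [hS₂r, Matrix.mul_one]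
  · intro hcomm
    refine ⟨r₁^2 / r₂^2, by positivity, ?_⟩
    -- from commutation: S₁ᴴ H S₁ = S₂ᴴ H S₂
    have E3 : S₁ᴴ * (hᴴ * h) * S₁ = S₂ᴴ * (hᴴ * h) * S₂ := by
      have hc : hᴴ * h * (S₁ * S₂ᴴ) = S₁ * S₂ᴴ * (hᴴ * h) := hcomm
      calc S₁ᴴ * (hᴴ * h) * S₁
          = S₁ᴴ * ((hᴴ * h) * (S₁ * S₂ᴴ)) * S₂ := by
            simp only [Matrix.mul_assoc, hS₂l, Matrix.mul_one]
        _ = S₁ᴴ * (S₁ * S₂ᴴ * (hᴴ * h)) * S₂ := by rw [hc]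
        _ = (S₁ᴴ * S₁) * (S₂ᴴ * (hᴴ * h) * S₂) := by simp only [Matrix.mul_assoc]
        _ = S₂ᴴ * (hᴴ * h) * S₂ := by rw [hS₁l, Matrix.one_mul]
    -- now assemble
    have expand : ∀ (r : ℝ) (S : Matrix (Fin d) (Fin d) ℂ),
        ((r : ℂ) • (h * S * g⁻¹))ᴴ * ((r : ℂ) • (h * S * g⁻¹))
          = ((r^2 : ℝ) : ℂ) • ((g⁻¹)ᴴ * (Sᴴ * (hᴴ * h) * S) * g⁻¹) := by
      intro r S
      simp only [conjTranspose_smul, Matrix.conjTranspose_mul, Matrix.smul_mul, Matrix.mul_smul,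
        smul_smul]
      rw [Complex.star_def, Complex.conj_ofReal]
      push_cast
      rw [← pow_two]
      congr 1
      simp only [Matrix.mul_assoc]
    rw [hA₁, hA₂, expand r₁ S₁, expand r₂ S₂, E3, smul_smul]
    congr 1
    have : (r₂ : ℂ) ≠ 0 := by exact_mod_cast hr₂.ne'
    push_cast
    field_simp
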